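/- For m parallel preemptive-LIFO (or PS) servers with rates ν_1,…,ν_m and Bernoulli splitting probabilities p_i, the system mean slowdown is E[γ*] = (Σ_j ν_j)·Σ_{i=1}^m p_i/(ν_i − p_i λ E[Y]); minimizing over probability vectors (p_i ≥ 0, Σp_i = 1, p_i λE[Y] < ν_i) yields, when interior, p_i = (ν_i − √(ν_i)·G)/(λE[Y]) with G = (Σ_i ν_i − λE[Y])/(Σ_i √(ν_i)). -/

import Mathlib

/-- RND-opt for parallel preemptive-LIFO/PS servers: with `c = λE[Y] > 0`,
`G = (Σνᵢ − c)/(Σ√νᵢ)` and `pᵢ = (νᵢ − √νᵢ·G)/c` all interior (`0 < pᵢ`, `c·pᵢ < νᵢ`),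
the `pᵢ` form a probability distribution and are a stationary point of
`Σᵢ pᵢ/(νᵢ − c·pᵢ)` subject to `Σpᵢ = 1`: all partial derivatives are equal. -/
theorem rnd_opt_stationary
    (m : ℕ) (hm : 0 < m) (ν : Fin m → ℝ) (hν : ∀ i, 0 < ν i)
    (c : ℝ) (hc : 0 < c) (G : ℝ)
    (hG : G = ((∑ i, ν i) - c) / (∑ i, Real.sqrt (ν i)))
    (p : Fin m → ℝ)
    (hp : ∀ i, p i = (ν i - Real.sqrt (ν i) * G) / c)
    (hint : ∀ i, 0 < p i ∧ c * p i < ν i) :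
    (∑ i, p i) = 1 ∧ ∃ η : ℝ, ∀ i, HasDerivAt (fun t => t / (ν i - c * t)) η (p i) := by
  have hsqpos : ∀ i, 0 < Real.sqrt (ν i) := fun i => Real.sqrt_pos.mpr (hν i)
  have hS : 0 < ∑ i, Real.sqrt (ν i) :=
    Finset.sum_pos (fun i _ => hsqpos i) (Finset.univ_nonempty_iff.mpr ⟨⟨0, hm⟩⟩)
  have hkey : ∀ i, ν i - c * p i = Real.sqrt (ν i) * G := by
    intro i
    rw [hp i]
    field_simp
    ring
  constructor
  · calc (∑ i, p i) = ∑ i, (ν i - Real.sqrt (ν i) * G) / c :=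
          Finset.sum_congr rfl fun i _ => hp i
      _ = ((∑ i, ν i) - (∑ i, Real.sqrt (ν i)) * G) / c := by
          rw [← Finset.sum_div, Finset.sum_sub_distrib, ← Finset.sum_mul]
      _ = 1 := by rw [hG]; field_simp; ring
  · have hGpos : 0 < G := by
      have h0 := (hint ⟨0, hm⟩).2
      have := hkey ⟨0, hm⟩
      nlinarith [hsqpos ⟨0, hm⟩]
    refine ⟨1 / G ^ 2, fun i => ?_⟩
    have hne : ν i - c * p i ≠ 0 := by
      rw [hkey i]; exact (mul_pos (hsqpos i) hGpos).ne'
    have hg : HasDerivAt (fun t => ν i - c * t) (-c) (p i) := by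
      simpa using ((hasDerivAt_id' (p i)).const_mul c).const_sub (ν i)
    have hd := (hasDerivAt_id (p i)).div hg hne
    refine hd.congr_deriv (Eq.symm ?_)
    have hνsq : Real.sqrt (ν i) ^ 2 = ν i := Real.sq_sqrt (hν i).le
    have hnum : 1 * (ν i - c * p i) - id (p i) * (-c) = ν i := by
      simp only [id]; ring
    rw [hnum, hkey i, mul_pow, hνsq]
    rw [eq_div_iff (mul_pos (hν i) (pow_pos hGpos 2)).ne']
    field_simp
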